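/- For all v, w ∈ W, the set {xq : x, q ∈ W, x ≤ v, q ≤ w} has a maximum element in the Bruhat order, and this maximum equals the Demazure product v * w. -/

import Mathlib

open scoped Classical

/-- Data of a root system with a fixed choice of simple roots: an ambient
`ℚ`-vector space `V`, a set of roots `Φ` with a distinguished subset `pos` of
positive roots, a coroot functional `coroot β = ⟨·, β^∨⟩` for each root, and
simple roots `α 1, …, α r`. -/
structure RootData where
  r : ℕ
  V : Type
  [grp : AddCommGroup V]
  [mod : Module ℚ V]
  Φ : Set V
  pos : Set V
  coroot : V → Module.Dual ℚ V
  α : Fin r → V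

attribute [instance] RootData.grp RootData.mod

namespace RootData

variable (R : RootData)

/-- The group of linear automorphisms of `V`, in which the Weyl group lives. -/
abbrev Aut : Type := R.V ≃ₗ[ℚ] R.V

/-- The linear map `v ↦ v - ⟨v, β^∨⟩ β`. -/
noncomputable def reflMap (β : R.V) : R.V →ₗ[ℚ] R.V :=
  LinearMap.id - (R.coroot β).smulRight β

/-- The reflection `s_β` associated to a root `β`, as a linear automorphism. -/
noncomputable def s (β : R.V) : R.Aut :=
  if h : (R.reflMap β).comp (R.reflMap β) = LinearMap.id then
    LinearEquiv.ofLinear (R.reflMap β) (R.reflMap β) h h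
  else LinearEquiv.refl ℚ R.V

/-- The simple reflections `s_i := s_{α_i}`. -/
noncomputable def S (i : Fin R.r) : R.Aut := R.s (R.α i)

/-- The Weyl group `W`, generated by the simple reflections. -/
noncomputable def weylGroup : Subgroup R.Aut := Subgroup.closure (Set.range R.S)

/-- The product `s_{i_1} ⋯ s_{i_k}` of a word in the simple reflections. -/
noncomputable def wordProd (l : List (Fin R.r)) : R.Aut := (l.map R.S).prod

/-- The length function on `W`: least length of a word in the simple
reflections expressing the given element. -/
noncomputable def len (w : R.Aut) : ℕ :=
  sInf {n | ∃ l : List (Fin R.r), l.length = n ∧ R.wordProd l = w}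

/-- A word is reduced if its length equals the length of its product. -/
def Reduced (l : List (Fin R.r)) : Prop := R.len (R.wordProd l) = l.length

/-- The Bruhat order on `W`: `u ≤ w` iff some reduced word for `w` has a
subword whose product is `u`. -/
def BruhatLE (u w : R.Aut) : Prop :=
  ∃ l : List (Fin R.r), R.Reduced l ∧ R.wordProd l = w ∧
    ∃ l' : List (Fin R.r), l'.Sublist l ∧ R.wordProd l' = u

/-- Strict Bruhat order. -/
def BruhatLT (u w : R.Aut) : Prop := R.BruhatLE u w ∧ u ≠ w

/-- One step of the Demazure product: `s_i * w := max {w, s_i w}`. -/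
noncomputable def dmulStep (i : Fin R.r) (x : R.Aut) : R.Aut :=
  if R.len x < R.len (R.S i * x) then R.S i * x else x

/-- Demazure product of a word in the simple reflections against `w`:
`s_{i_1} * (s_{i_2} * (⋯ * (s_{i_k} * w)))`. -/
noncomputable def dmulList (l : List (Fin R.r)) (w : R.Aut) : R.Aut :=
  l.foldr R.dmulStep w

/-- The Demazure product `v * w` on the Weyl group, computed by choosing a
reduced word for `v` (it is independent of this choice). -/
noncomputable def dmul (v w : R.Aut) : R.Aut :=
  if h : ∃ l : List (Fin R.r), R.Reduced l ∧ R.wordProd l = v then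
    R.dmulList h.choose w
  else v * w

/-- The parabolic subgroup `W_{P_i}` generated by the simple reflections
`s_j`, `j ≠ i`. -/
noncomputable def WPar (i : Fin R.r) : Subgroup R.Aut :=
  Subgroup.closure (R.S '' {j | j ≠ i})

/-- `W^{P_i}`: the set of minimal-length representatives of cosets of
`W/W_{P_i}`. -/
def minReps (i : Fin R.r) : Set R.Aut :=
  {v | v ∈ R.weylGroup ∧ ∀ p ∈ R.WPar i, R.len v ≤ R.len (v * p)}

/-- `u` is the minimal-length representative of the coset `w W_{P_i}`. -/
def IsMinRep (i : Fin R.r) (u w : R.Aut) : Prop :=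
  u ∈ R.minReps i ∧ u⁻¹ * w ∈ R.WPar i

/-- A weight is dominant if it pairs nonnegatively with every simple coroot. -/
def Dominant (lam : R.V) : Prop := ∀ i : Fin R.r, 0 ≤ R.coroot (R.α i) lam

/-- The dual action of the Weyl group on `V* `: `(u f)(v) = f(u⁻¹ v)`. -/
noncomputable def dualAct (u : R.Aut) (f : Module.Dual ℚ R.V) : Module.Dual ℚ R.V :=
  f.comp (u.symm : R.V →ₗ[ℚ] R.V)

/-- The Demazure polytope `P_λ^w := conv {uλ : u ∈ W, u ≤ w}`. -/
noncomputable def demPolytope (lam : R.V) (w : R.Aut) : Set R.V :=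
  convexHull ℚ {m | ∃ u : R.Aut, u ∈ R.weylGroup ∧ R.BruhatLE u w ∧ m = u lam}

/-- Membership in the weight lattice `X`. -/
def IsWeight (lam : R.V) : Prop := ∀ β ∈ R.Φ, ∃ m : ℤ, R.coroot β lam = (m : ℚ)

/-- The root lattice `Q = ℤΦ`. -/
noncomputable def rootLattice : AddSubgroup R.V := AddSubgroup.closure R.Φ

/-- `w₀` is the longest element of the Weyl group. -/
def IsLongest (w₀ : R.Aut) : Prop :=
  w₀ ∈ R.weylGroup ∧ ∀ g ∈ R.weylGroup, R.len g ≤ R.len w₀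

/-- The positive roots `Φ_{P_i}⁺ = Φ⁺ ∩ span {α_j : j ≠ i}` of the standard
Levi subsystem. -/
def parPos (i : Fin R.r) : Set R.V :=
  {η | η ∈ R.pos ∧ η ∈ Submodule.span ℚ (R.α '' {j | j ≠ i})}

/-- The value `D_i (e^λ)` of the Demazure operator on a basis element of the
group ring `ℤ[X]`. -/
noncomputable def demOnBasis (i : Fin R.r) (lam : R.V) : R.V →₀ ℤ :=
  if 0 ≤ ⌊R.coroot (R.α i) lam⌋ then
    ∑ k ∈ Finset.range (⌊R.coroot (R.α i) lam⌋.toNat + 1),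
      Finsupp.single (lam - (k : ℚ) • R.α i) 1
  else if ⌊R.coroot (R.α i) lam⌋ = -1 then 0
  else - ∑ k ∈ Finset.range ((-⌊R.coroot (R.α i) lam⌋).toNat - 1),
      Finsupp.single (lam + ((k : ℚ) + 1) • R.α i) 1

/-- The Demazure operator `D_i`, as a `ℤ`-linear endomorphism of the group
ring `ℤ[X]` (realized as finitely supported functions `V →₀ ℤ`). -/
noncomputable def demOp (i : Fin R.r) : (R.V →₀ ℤ) →ₗ[ℤ] (R.V →₀ ℤ) :=
  Finsupp.lsum ℤ fun lam => LinearMap.toSpanSingleton ℤ (R.V →₀ ℤ) (R.demOnBasis i lam)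

/-- The Demazure character `D_{i_1} ⋯ D_{i_k} (e^λ)`. -/
noncomputable def demChar (l : List (Fin R.r)) (lam : R.V) : R.V →₀ ℤ :=
  l.foldr (fun i p => R.demOp i p) (Finsupp.single lam 1)

/-- The axioms of a finite crystallographic root system spanning `V`, with
simple roots `α_i` and positive roots `pos`. -/
structure IsRootSystem (R : RootData) : Prop where
  finite : R.Φ.Finite
  span_top : Submodule.span ℚ R.Φ = ⊤
  ne_zero : ∀ β ∈ R.Φ, β ≠ 0
  coroot_self : ∀ β ∈ R.Φ, R.coroot β β = 2
  crystallographic : ∀ β ∈ R.Φ, ∀ γ ∈ R.Φ, ∃ m : ℤ, R.coroot β γ = (m : ℚ)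
  reflection_stable : ∀ β ∈ R.Φ, ∀ γ ∈ R.Φ, γ - R.coroot β γ • β ∈ R.Φ
  simple_mem : ∀ i, R.α i ∈ R.Φ
  indep : LinearIndependent ℚ R.α
  pos_subset : R.pos ⊆ R.Φ
  pos_or_neg : ∀ β ∈ R.Φ, (β ∈ R.pos ∧ -β ∉ R.pos) ∨ (β ∉ R.pos ∧ -β ∈ R.pos)
  simple_pos : ∀ i, R.α i ∈ R.pos
  pos_nonneg_comb : ∀ β ∈ R.pos, ∃ c : Fin R.r → ℚ, (∀ i, 0 ≤ c i) ∧ β = ∑ i, c i • R.α i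

end RootData

namespace RootData

variable {R : RootData}

section Basics
variable (hR : R.IsRootSystem)

lemma reflMap_apply (β v : R.V) : R.reflMap β v = v - R.coroot β v • β := by
  simp [reflMap]

lemma reflMap_invol {β : R.V} (h2 : R.coroot β β = 2) :
    (R.reflMap β).comp (R.reflMap β) = LinearMap.id := by
  ext v
  simp only [LinearMap.comp_apply, reflMap_apply, LinearMap.id_apply, map_sub, map_smul, h2,
    smul_eq_mul]
  module

lemma s_apply {β : R.V} (h2 : R.coroot β β = 2) (v : R.V) :
    R.s β v = v - R.coroot β v • β := by
  rw [s, dif_pos (reflMap_invol h2)]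
  simp [reflMap_apply]

lemma s_mul_self {β : R.V} (h2 : R.coroot β β = 2) : R.s β * R.s β = 1 := by
  apply LinearEquiv.toLinearMap_injective
  ext v
  show R.s β (R.s β v) = v
  simp only [s_apply h2, map_sub, map_smul, h2, smul_eq_mul]
  module

lemma s_inv {β : R.V} (h2 : R.coroot β β = 2) : (R.s β)⁻¹ = R.s β := by
  rw [inv_eq_iff_mul_eq_one, s_mul_self h2]

lemma s_apply_self {β : R.V} (h2 : R.coroot β β = 2) : R.s β β = -β := by
  rw [s_apply h2, h2]; module

end Basics

end RootData

namespace RootData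

variable {R : RootData}

section Words
variable (hR : R.IsRootSystem)
include hR

lemma coroot_simple_self (i : Fin R.r) : R.coroot (R.α i) (R.α i) = 2 :=
  hR.coroot_self _ (hR.simple_mem i)

lemma S_apply (i : Fin R.r) (v : R.V) :
    R.S i v = v - R.coroot (R.α i) v • R.α i := s_apply (coroot_simple_self hR i) v

lemma S_mul_self (i : Fin R.r) : R.S i * R.S i = 1 := s_mul_self (coroot_simple_self hR i)

lemma S_inv (i : Fin R.r) : (R.S i)⁻¹ = R.S i := s_inv (coroot_simple_self hR i)

omit hR in
@[simp] lemma wordProd_nil : R.wordProd [] = 1 := rfl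

omit hR in
lemma wordProd_cons (i : Fin R.r) (l : List (Fin R.r)) :
    R.wordProd (i :: l) = R.S i * R.wordProd l := by
  simp [wordProd]

omit hR in
lemma wordProd_append (a b : List (Fin R.r)) :
    R.wordProd (a ++ b) = R.wordProd a * R.wordProd b := by
  simp [wordProd]

omit hR in
lemma wordProd_singleton (i : Fin R.r) : R.wordProd [i] = R.S i := by
  simp [wordProd]

lemma wordProd_reverse (l : List (Fin R.r)) :
    R.wordProd l.reverse = (R.wordProd l)⁻¹ := by
  induction l with
  | nil => simp
  | cons i t ih =>
      simp only [List.reverse_cons, wordProd_append, ih, wordProd_singleton, wordProd_cons,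
        wordProd_nil, mul_one, mul_inv_rev, S_inv hR]

omit hR in
lemma wordProd_mem (l : List (Fin R.r)) : R.wordProd l ∈ R.weylGroup := by
  induction l with
  | nil => exact Subgroup.one_mem _
  | cons i t ih =>
      rw [wordProd_cons]
      exact Subgroup.mul_mem _ (Subgroup.subset_closure ⟨i, rfl⟩) ih

lemma mem_weylGroup_iff {w : R.Aut} :
    w ∈ R.weylGroup ↔ ∃ l : List (Fin R.r), R.wordProd l = w := by
  constructor
  · intro hw
    induction hw using Subgroup.closure_induction with
    | mem x hx => obtain ⟨i, rfl⟩ := hx; exact ⟨[i], wordProd_singleton i⟩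
    | one => exact ⟨[], rfl⟩
    | mul x y _ _ hx hy =>
        obtain ⟨a, ha⟩ := hx; obtain ⟨b, hb⟩ := hy
        exact ⟨a ++ b, by rw [wordProd_append, ha, hb]⟩
    | inv x _ hx =>
        obtain ⟨a, ha⟩ := hx
        exact ⟨a.reverse, by rw [wordProd_reverse hR, ha]⟩
  · rintro ⟨l, rfl⟩; exact wordProd_mem l

lemma s_mem_Phi {β γ : R.V} (hβ : β ∈ R.Φ) (hγ : γ ∈ R.Φ) : R.s β γ ∈ R.Φ := by
  rw [s_apply (hR.coroot_self β hβ)]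
  exact hR.reflection_stable β hβ γ hγ

lemma weyl_mem_Phi {w : R.Aut} (hw : w ∈ R.weylGroup) {γ : R.V} (hγ : γ ∈ R.Φ) :
    w γ ∈ R.Φ := by
  obtain ⟨l, rfl⟩ := (mem_weylGroup_iff hR).1 hw
  clear hw
  induction l with
  | nil => exact hγ
  | cons i t ih =>
      rw [wordProd_cons]
      exact s_mem_Phi hR (hR.simple_mem i) ih

end Words

end RootData

namespace RootData

variable {R : RootData}

section Unique
variable (hR : R.IsRootSystem)
include hR

lemma refl_unique {γ : R.V} (hγ : γ ∈ R.Φ) (f f' : Module.Dual ℚ R.V)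
    (hf2 : f γ = 2) (hf'2 : f' γ = 2)
    (hfΦ : ∀ β ∈ R.Φ, β - f β • γ ∈ R.Φ) (hf'Φ : ∀ β ∈ R.Φ, β - f' β • γ ∈ R.Φ) :
    f = f' := by
  have key : ∀ β ∈ R.Φ, f β = f' β := by
    intro β hβ
    by_contra hne
    have hc : f β - f' β ≠ 0 := sub_ne_zero.2 hne
    have hseq : ∀ n : ℕ, β - ((n : ℚ) * (f β - f' β)) • γ ∈ R.Φ := by
      intro n
      induction n with
      | zero => simpa using hβ
      | succ n ih =>
          have h1 := hf'Φ _ ih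
          have h2 := hfΦ _ h1
          convert h2 using 1
          simp only [map_sub, map_smul, smul_eq_mul, hf2, hf'2]
          push_cast
          module
    have hinj : Function.Injective (fun n : ℕ => β - ((n : ℚ) * (f β - f' β)) • γ) := by
      intro a b hab
      simp only [sub_right_inj] at hab
      have : ((a : ℚ) * (f β - f' β)) = ((b : ℚ) * (f β - f' β)) := by
        by_contra hne2
        have := sub_eq_zero.2 hab
        rw [← sub_smul] at this
        rcases smul_eq_zero.1 this with h | h
        · exact hne2 (sub_eq_zero.1 h ▸ rfl)
        · exact hR.ne_zero γ hγ h
      have := mul_right_cancel₀ hc this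
      exact_mod_cast this
    exact (Set.infinite_of_injective_forall_mem hinj (fun n => hseq n)) hR.finite
  apply LinearMap.ext_on hR.span_top
  exact key

lemma s_eq_of_smul {β γ : R.V} (hβ : β ∈ R.Φ) (hγ : γ ∈ R.Φ) {q : ℚ}
    (hq : β = q • γ) : R.s β = R.s γ := by
  have h2β := hR.coroot_self β hβ
  have h2γ := hR.coroot_self γ hγ
  have hfeq : q • R.coroot β = R.coroot γ := by
    apply refl_unique hR hγ
    · show (q • R.coroot β) γ = 2
      have : R.coroot β (q • γ) = 2 := by rw [← hq]; exact h2β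
      rw [map_smul, smul_eq_mul] at this
      simpa [smul_eq_mul] using this
    · exact h2γ
    · intro δ hδ
      have := hR.reflection_stable β hβ δ hδ
      convert this using 2
      rw [hq]
      simp [smul_smul, mul_comm]
    · intro δ hδ
      exact hR.reflection_stable γ hγ δ hδ
  apply LinearEquiv.toLinearMap_injective
  ext v
  show R.s β v = R.s γ v
  rw [s_apply h2β, s_apply h2γ, ← hfeq]
  simp [hq, smul_smul, mul_comm]

lemma s_conj {w : R.Aut} (hw : w ∈ R.weylGroup) {β : R.V} (hβ : β ∈ R.Φ) :
    R.s (w β) = w * R.s β * w⁻¹ := by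
  have hwβ : w β ∈ R.Φ := weyl_mem_Phi hR hw hβ
  have h2β := hR.coroot_self β hβ
  have hwinv : w⁻¹ ∈ R.weylGroup := Subgroup.inv_mem _ hw
  have hfeq : R.coroot (w β) = (R.coroot β).comp (↑(w⁻¹ : R.Aut) : R.V →ₗ[ℚ] R.V) := by
    apply refl_unique hR hwβ
    · exact hR.coroot_self _ hwβ
    · show R.coroot β ((w⁻¹ : R.Aut) (w β)) = 2
      rw [show (w⁻¹ : R.Aut) (w β) = β from w.symm_apply_apply β]
      exact h2β
    · intro δ hδ
      exact hR.reflection_stable _ hwβ δ hδ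
    · intro δ hδ
      show δ - R.coroot β ((w⁻¹ : R.Aut) δ) • w β ∈ R.Φ
      have : δ - R.coroot β ((w⁻¹ : R.Aut) δ) • w β
          = w ((w⁻¹ : R.Aut) δ - R.coroot β ((w⁻¹ : R.Aut) δ) • β) := by
        rw [map_sub, map_smul]
        congr 1
        exact (w.apply_symm_apply δ).symm
      rw [this]
      exact weyl_mem_Phi hR hw (hR.reflection_stable β hβ _ (weyl_mem_Phi hR hwinv hδ))
  apply LinearEquiv.toLinearMap_injective
  ext v
  show R.s (w β) v = w (R.s β ((w⁻¹ : R.Aut) v))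
  rw [s_apply (hR.coroot_self _ hwβ), s_apply h2β, hfeq]
  simp only [LinearMap.comp_apply, map_sub, map_smul]
  congr 1
  exact (w.apply_symm_apply v).symm

end Unique

end RootData

namespace RootData

variable {R : RootData}

section Pos
variable (hR : R.IsRootSystem)
include hR

lemma pos_dichotomy {β : R.V} (hβ : β ∈ R.Φ) : β ∈ R.pos ∨ -β ∈ R.pos := by
  rcases hR.pos_or_neg β hβ with ⟨h, _⟩ | ⟨_, h⟩
  · exact Or.inl h
  · exact Or.inr h

lemma neg_not_pos {β : R.V} (hβ : β ∈ R.pos) : -β ∉ R.pos := by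
  rcases hR.pos_or_neg β (hR.pos_subset hβ) with ⟨_, h⟩ | ⟨h, _⟩
  · exact h
  · exact absurd hβ h

lemma pos_of_not_neg {β : R.V} (hβ : β ∈ R.Φ) (h : -β ∉ R.pos) : β ∈ R.pos :=
  (pos_dichotomy hR hβ).resolve_right h

lemma no_pos_neg_smul {γ : R.V} (hγ : γ ∈ R.pos) {q : ℚ} (hq : 0 < q)
    (h : -(q • γ) ∈ R.pos) : False := by
  obtain ⟨c, hc, hcγ⟩ := hR.pos_nonneg_comb γ hγ
  obtain ⟨d, hd, hdγ⟩ := hR.pos_nonneg_comb _ h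
  have hzero : ∑ i, (q * c i + d i) • R.α i = 0 := by
    have key : q • γ + -(q • γ) = 0 := by simp
    rw [hdγ, hcγ, Finset.smul_sum, ← Finset.sum_add_distrib] at key
    simpa [smul_smul, add_smul] using key
  have hall := (Fintype.linearIndependent_iff.1 hR.indep) _ hzero
  have hczero : ∀ i, c i = 0 := by
    intro i
    have h1 := hall i
    nlinarith [hc i, hd i]
  have : γ = 0 := by rw [hcγ]; simp [hczero]
  exact hR.ne_zero γ (hR.pos_subset hγ) this

lemma simple_scaled {β : R.V} (i : Fin R.r) (hβ : β ∈ R.pos) (h : R.S i β ∉ R.pos) :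
    ∃ q : ℚ, 0 < q ∧ β = q • R.α i := by
  have hβΦ : β ∈ R.Φ := hR.pos_subset hβ
  have hSβΦ : R.S i β ∈ R.Φ := s_mem_Phi hR (hR.simple_mem i) hβΦ
  have hnegΦ : -(R.S i β) ∈ R.Φ := by
    have h2 := hR.coroot_self _ hSβΦ
    have := hR.reflection_stable _ hSβΦ _ hSβΦ
    rw [h2] at this
    convert this using 1
    module
  have hneg : -(R.S i β) ∈ R.pos := pos_of_not_neg hR hnegΦ (by simpa using h)
  obtain ⟨c, hc, hcβ⟩ := hR.pos_nonneg_comb β hβ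
  obtain ⟨d, hd, hdβ⟩ := hR.pos_nonneg_comb _ hneg
  set k := R.coroot (R.α i) β with hk
  have hsum : ∑ j, (c j + d j - (if j = i then k else 0)) • R.α j = 0 := by
    have hSapp : R.S i β = β - k • R.α i := S_apply hR i β
    have key : β + -(R.S i β) - k • R.α i = 0 := by rw [hSapp]; abel
    rw [hdβ, hcβ] at key
    rw [← Finset.sum_add_distrib] at key
    have hki : (k : ℚ) • R.α i = ∑ j, (if j = i then k else 0) • R.α j := by
      have : ∀ j, (if j = i then k else 0) • R.α j = if j = i then k • R.α i else 0 := by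
        intro j
        by_cases hji : j = i <;> simp [hji]
      rw [Finset.sum_congr rfl fun j _ => this j, Finset.sum_ite_eq' Finset.univ i]
      simp
    rw [hki, ← Finset.sum_sub_distrib] at key
    simpa [add_smul, sub_smul] using key
  have hall := (Fintype.linearIndependent_iff.1 hR.indep) _ hsum
  have hcj : ∀ j, j ≠ i → c j = 0 := by
    intro j hj
    have h1 := hall j
    simp [hj] at h1
    nlinarith [hc j, hd j]
  have hβeq : β = c i • R.α i := by
    rw [hcβ]
    rw [Finset.sum_eq_single i]
    · intro j _ hj; simp [hcj j hj]
    · intro hmem; exact absurd (Finset.mem_univ i) hmem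
  refine ⟨c i, ?_, hβeq⟩
  rcases lt_or_eq_of_le (hc i) with h' | h'
  · exact h'
  · exfalso
    apply hR.ne_zero β hβΦ
    rw [hβeq, ← h']
    simp

lemma s_S_scaled {β : R.V} (i : Fin R.r) {q : ℚ} (hq : q ≠ 0) (hβ : β ∈ R.Φ)
    (h : β = q • R.α i) : R.s β = R.S i :=
  s_eq_of_smul hR hβ (hR.simple_mem i) h

end Pos

end RootData

namespace RootData

variable {R : RootData}

lemma one_apply (v : R.V) : (1 : R.Aut) v = v := rfl

lemma mul_apply (u w : R.Aut) (v : R.V) : (u * w) v = u (w v) := rfl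

lemma inv_apply_apply (w : R.Aut) (v : R.V) : w⁻¹ (w v) = v := w.symm_apply_apply v

lemma apply_inv_apply (w : R.Aut) (v : R.V) : w (w⁻¹ v) = v := w.apply_symm_apply v

section Length

lemma len_le_length (l : List (Fin R.r)) : R.len (R.wordProd l) ≤ l.length :=
  Nat.sInf_le ⟨l, rfl, rfl⟩

lemma len_le_of_word {w : R.Aut} (l : List (Fin R.r)) (h : R.wordProd l = w) :
    R.len w ≤ l.length := h ▸ len_le_length l

lemma reduced_nil : R.Reduced ([] : List (Fin R.r)) := by
  have : R.len (R.wordProd []) ≤ 0 := len_le_length []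
  simpa [Reduced] using this

lemma len_one : R.len (1 : R.Aut) = 0 := Nat.le_zero.1 (len_le_of_word [] rfl)

variable (hR : R.IsRootSystem)
include hR

lemma exists_reduced {w : R.Aut} (hw : w ∈ R.weylGroup) :
    ∃ l : List (Fin R.r), R.Reduced l ∧ R.wordProd l = w := by
  obtain ⟨l0, hl0⟩ := (mem_weylGroup_iff hR).1 hw
  have hne : {n | ∃ l : List (Fin R.r), l.length = n ∧ R.wordProd l = w}.Nonempty :=
    ⟨l0.length, l0, rfl, hl0⟩
  obtain ⟨l, hlen, hprod⟩ := Nat.sInf_mem hne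
  refine ⟨l, ?_, hprod⟩
  show R.len (R.wordProd l) = l.length
  rw [hprod, hlen]
  rfl

lemma reduced_word_len {l : List (Fin R.r)} (h : R.Reduced l) :
    R.len (R.wordProd l) = l.length := h

omit hR in
lemma eq_one_of_len_zero {w : R.Aut} (hR : R.IsRootSystem) (hw : w ∈ R.weylGroup)
    (h : R.len w = 0) : w = 1 := by
  obtain ⟨l, hl, hprod⟩ := exists_reduced hR hw
  have : l.length = 0 := by rw [← reduced_word_len hR hl, hprod, h]
  rw [← hprod, List.length_eq_zero_iff.1 this]
  rfl

lemma len_mul_le {v w : R.Aut} (hv : v ∈ R.weylGroup) (hw : w ∈ R.weylGroup) :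
    R.len (v * w) ≤ R.len v + R.len w := by
  obtain ⟨a, ha, hap⟩ := exists_reduced hR hv
  obtain ⟨b, hb, hbp⟩ := exists_reduced hR hw
  have := len_le_of_word (a ++ b) (by rw [wordProd_append, hap, hbp])
  simpa [List.length_append, ← reduced_word_len hR ha, ← reduced_word_len hR hb, hap, hbp]
    using this

lemma len_inv {w : R.Aut} (hw : w ∈ R.weylGroup) : R.len w⁻¹ = R.len w := by
  have key : ∀ u : R.Aut, u ∈ R.weylGroup → R.len u⁻¹ ≤ R.len u := by
    intro u hu
    obtain ⟨l, hl, hp⟩ := exists_reduced hR hu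
    have := len_le_of_word l.reverse (by rw [wordProd_reverse hR, hp])
    simpa [← reduced_word_len hR hl, hp] using this
  refine le_antisymm (key w hw) ?_
  have := key w⁻¹ (Subgroup.inv_mem _ hw)
  simpa using this

lemma strong_exchange (l : List (Fin R.r)) {β : R.V} (hβ : β ∈ R.pos)
    (hneg : -((R.wordProd l)⁻¹ β) ∈ R.pos) :
    ∃ k, ∃ _ : k < l.length,
      R.s β * R.wordProd (l.take k) = R.wordProd (l.take (k + 1)) := by
  have hβΦ : β ∈ R.Φ := hR.pos_subset hβ
  set P : ℕ → Prop := fun k => -((R.wordProd (l.take k))⁻¹ β) ∈ R.pos with hP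
  have hP0 : ¬ P 0 := by
    simp only [hP, List.take_zero, wordProd_nil, inv_one]
    show ¬(-((1 : R.Aut) β) ∈ R.pos)
    rw [one_apply]
    exact neg_not_pos hR hβ
  have hPl : P l.length := by simpa [hP, List.take_length] using hneg
  have hex : ∃ k, P k := ⟨l.length, hPl⟩
  have hkP : P (Nat.find hex) := Nat.find_spec hex
  have hk0 : Nat.find hex ≠ 0 := fun h => hP0 (h ▸ hkP)
  obtain ⟨k, hkeq⟩ := Nat.exists_eq_succ_of_ne_zero hk0
  rw [hkeq] at hkP
  have hklt : k + 1 ≤ l.length := by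
    have := Nat.find_min' hex hPl
    omega
  have hklen : k < l.length := hklt
  have hnk : ¬ P k := by
    apply Nat.find_min hex
    omega
  set u' := R.wordProd (l.take k) with hu'
  have hu'W : u' ∈ R.weylGroup := wordProd_mem _
  set γ := u'⁻¹ β with hγ
  have hγΦ : γ ∈ R.Φ := weyl_mem_Phi hR (Subgroup.inv_mem _ hu'W) hβΦ
  have hγpos : γ ∈ R.pos := pos_of_not_neg hR hγΦ hnk
  set c := l.get ⟨k, hklen⟩ with hc
  have htake : l.take (k + 1) = l.take k ++ [c] := by
    rw [List.take_succ]
    congr 1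
    rw [List.getElem?_eq_getElem hklen]
    rfl
  have hprodsucc : R.wordProd (l.take (k + 1)) = u' * R.S c := by
    rw [htake, wordProd_append, wordProd_singleton]
  have hScγ : R.S c γ ∉ R.pos := by
    intro hpos
    apply neg_not_pos hR hpos
    have h1 : -((R.wordProd (l.take (k+1)))⁻¹ β) ∈ R.pos := hkP
    have h2 : (R.wordProd (l.take (k+1)))⁻¹ β = R.S c γ := by
      rw [hprodsucc, mul_inv_rev, S_inv hR, mul_apply]
    rwa [h2] at h1
  obtain ⟨q, hq, hγeq⟩ := simple_scaled hR c hγpos hScγ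
  have hαcΦ : u' (R.α c) ∈ R.Φ := weyl_mem_Phi hR hu'W (hR.simple_mem c)
  have hβeq : β = q • u' (R.α c) := by
    have : u' γ = β := apply_inv_apply u' β
    rw [← this, hγeq, map_smul]
  have hs1 : R.s β = R.s (u' (R.α c)) := s_eq_of_smul hR hβΦ hαcΦ hβeq
  have hs2 : R.s (u' (R.α c)) = u' * R.s (R.α c) * u'⁻¹ := s_conj hR hu'W (hR.simple_mem c)
  refine ⟨k, hklen, ?_⟩
  rw [hs1, hs2, hprodsucc]
  show u' * R.s (R.α c) * u'⁻¹ * u' = u' * R.S c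
  rw [mul_assoc, inv_mul_cancel, mul_one]
  rfl

lemma exchange_erase (l : List (Fin R.r)) {β : R.V} (hβ : β ∈ R.pos)
    (hneg : -((R.wordProd l)⁻¹ β) ∈ R.pos) :
    ∃ k, ∃ _ : k < l.length, R.s β * R.wordProd l = R.wordProd (l.eraseIdx k) := by
  obtain ⟨k, hklen, hex⟩ := strong_exchange hR l hβ hneg
  refine ⟨k, hklen, ?_⟩
  set c := l.get ⟨k, hklen⟩ with hc
  have htake : l.take (k + 1) = l.take k ++ [c] := by
    rw [List.take_succ]
    congr 1
    rw [List.getElem?_eq_getElem hklen]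
    rfl
  have hdrop : (c : Fin R.r) :: l.drop (k + 1) = l.drop k := List.getElem_cons_drop hklen
  have hsplit : R.wordProd l = R.wordProd (l.take k) * R.wordProd (l.drop k) := by
    rw [← wordProd_append, List.take_append_drop]
  have hsplit2 : R.wordProd (l.drop k) = R.S c * R.wordProd (l.drop (k+1)) := by
    rw [← hdrop, wordProd_cons]
  rw [List.eraseIdx_eq_take_drop_succ, wordProd_append, hsplit, hsplit2, ← mul_assoc, ← mul_assoc,
    hex, htake, wordProd_append, wordProd_singleton, mul_assoc, mul_assoc]
  congr 1
  rw [← mul_assoc, S_mul_self hR, one_mul]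

lemma len_smul_lt_of_neg {w : R.Aut} (hw : w ∈ R.weylGroup) {i : Fin R.r}
    (h : -(w⁻¹ (R.α i)) ∈ R.pos) : R.len (R.S i * w) < R.len w := by
  obtain ⟨l, hl, hprod⟩ := exists_reduced hR hw
  have hneg : -((R.wordProd l)⁻¹ (R.α i)) ∈ R.pos := by rwa [hprod]
  obtain ⟨k, hklen, herase⟩ := exchange_erase hR l (hR.simple_pos i) hneg
  have hS : R.S i * w = R.wordProd (l.eraseIdx k) := by
    rw [← hprod]
    exact herase
  have hlen1 : R.len (R.S i * w) ≤ (l.eraseIdx k).length := len_le_of_word _ hS.symm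
  rw [List.length_eraseIdx, if_pos hklen] at hlen1
  have : R.len w = l.length := by rw [← hprod]; exact hl
  omega

lemma neg_iff_len_lt {w : R.Aut} (hw : w ∈ R.weylGroup) (i : Fin R.r) :
    -(w⁻¹ (R.α i)) ∈ R.pos ↔ R.len (R.S i * w) < R.len w := by
  constructor
  · exact len_smul_lt_of_neg hR hw
  · intro hlen
    by_contra hn
    have hΦ : w⁻¹ (R.α i) ∈ R.Φ :=
      weyl_mem_Phi hR (Subgroup.inv_mem _ hw) (hR.simple_mem i)
    have hpos : w⁻¹ (R.α i) ∈ R.pos := pos_of_not_neg hR hΦ hn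
    have hw'W : R.S i * w ∈ R.weylGroup :=
      Subgroup.mul_mem _ (Subgroup.subset_closure ⟨i, rfl⟩) hw
    have hkey : -((R.S i * w)⁻¹ (R.α i)) ∈ R.pos := by
      have h1 : (R.S i * w)⁻¹ (R.α i) = w⁻¹ (R.S i (R.α i)) := by
        rw [mul_inv_rev, S_inv hR, mul_apply]
      have h2 : R.S i (R.α i) = -(R.α i) := s_apply_self (coroot_simple_self hR i)
      rw [h1, h2, map_neg, neg_neg]
      exact hpos
    have := len_smul_lt_of_neg hR hw'W hkey
    rw [← mul_assoc, S_mul_self hR, one_mul] at this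
    omega

lemma len_smul_cases {w : R.Aut} (hw : w ∈ R.weylGroup) (i : Fin R.r) :
    R.len (R.S i * w) < R.len w ∨ R.len w < R.len (R.S i * w) := by
  have hΦ : w⁻¹ (R.α i) ∈ R.Φ :=
    weyl_mem_Phi hR (Subgroup.inv_mem _ hw) (hR.simple_mem i)
  rcases pos_dichotomy hR hΦ with hpos | hneg
  · right
    have hw'W : R.S i * w ∈ R.weylGroup :=
      Subgroup.mul_mem _ (Subgroup.subset_closure ⟨i, rfl⟩) hw
    have hkey : -((R.S i * w)⁻¹ (R.α i)) ∈ R.pos := by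
      have h1 : (R.S i * w)⁻¹ (R.α i) = w⁻¹ (R.S i (R.α i)) := by
        rw [mul_inv_rev, S_inv hR, mul_apply]
      have h2 : R.S i (R.α i) = -(R.α i) := s_apply_self (coroot_simple_self hR i)
      rw [h1, h2, map_neg, neg_neg]
      exact hpos
    have := len_smul_lt_of_neg hR hw'W hkey
    rwa [← mul_assoc, S_mul_self hR, one_mul] at this
  · left
    exact len_smul_lt_of_neg hR hw hneg

omit hR in
lemma smul_mem {w : R.Aut} (hw : w ∈ R.weylGroup) (i : Fin R.r) :
    R.S i * w ∈ R.weylGroup :=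
  Subgroup.mul_mem _ (Subgroup.subset_closure ⟨i, rfl⟩) hw

omit hR in
lemma mul_s_mem {w : R.Aut} (hw : w ∈ R.weylGroup) (i : Fin R.r) :
    w * R.S i ∈ R.weylGroup :=
  Subgroup.mul_mem _ hw (Subgroup.subset_closure ⟨i, rfl⟩)

lemma neg_iff_len_lt_right {w : R.Aut} (hw : w ∈ R.weylGroup) (i : Fin R.r) :
    -(w (R.α i)) ∈ R.pos ↔ R.len (w * R.S i) < R.len w := by
  have h1 := neg_iff_len_lt hR (Subgroup.inv_mem _ hw) i
  rw [inv_inv] at h1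
  have h2 : R.S i * w⁻¹ = (w * R.S i)⁻¹ := by rw [mul_inv_rev, S_inv hR]
  rw [h2, len_inv hR (Subgroup.mul_mem _ hw (Subgroup.subset_closure ⟨i, rfl⟩)),
    len_inv hR hw] at h1
  exact h1

lemma len_muls_cases {w : R.Aut} (hw : w ∈ R.weylGroup) (i : Fin R.r) :
    R.len (w * R.S i) < R.len w ∨ R.len w < R.len (w * R.S i) := by
  have h1 := len_smul_cases hR (Subgroup.inv_mem _ hw) i
  have h2 : R.S i * w⁻¹ = (w * R.S i)⁻¹ := by rw [mul_inv_rev, S_inv hR]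
  rwa [h2, len_inv hR (mul_s_mem hw i), len_inv hR hw] at h1

lemma exchange_right (l : List (Fin R.r)) {β : R.V} (hβ : β ∈ R.pos)
    (hneg : -(R.wordProd l β) ∈ R.pos) :
    ∃ m : List (Fin R.r), m.Sublist l ∧ R.wordProd l * R.s β = R.wordProd m ∧
      m.length < l.length := by
  have h2β := hR.coroot_self β (hR.pos_subset hβ)
  have hrev : -((R.wordProd l.reverse)⁻¹ β) ∈ R.pos := by
    rw [wordProd_reverse hR, inv_inv]
    exact hneg
  obtain ⟨k, hklen, herase⟩ := exchange_erase hR l.reverse hβ hrev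
  refine ⟨(l.reverse.eraseIdx k).reverse, ?_, ?_, ?_⟩
  · have h1 : (l.reverse.eraseIdx k).Sublist l.reverse := List.eraseIdx_sublist _ k
    have := h1.reverse
    rwa [List.reverse_reverse] at this
  · have h2 : (R.wordProd l.reverse)⁻¹ * (R.s β)⁻¹
        = (R.wordProd (l.reverse.eraseIdx k))⁻¹ := by
      rw [← mul_inv_rev, herase]
    rw [wordProd_reverse hR, inv_inv, s_inv h2β] at h2
    rw [h2]
    exact (wordProd_reverse hR _).symm
  · have hk2 : k < l.length := by simpa using hklen
    rw [List.length_reverse, List.length_eraseIdx, List.length_reverse, if_pos hk2]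
    omega

lemma deletion (l : List (Fin R.r)) :
    ∃ l', l'.Sublist l ∧ R.wordProd l' = R.wordProd l ∧ R.Reduced l' := by
  suffices H : ∀ n (l : List (Fin R.r)), l.length ≤ n →
      ∃ l', l'.Sublist l ∧ R.wordProd l' = R.wordProd l ∧ R.Reduced l' from
    H l.length l le_rfl
  intro n
  induction n with
  | zero =>
      intro l hl
      have : l = [] := List.length_eq_zero_iff.1 (Nat.le_zero.1 hl)
      subst this
      exact ⟨[], List.Sublist.refl _, rfl, reduced_nil⟩
  | succ n ih =>
      intro l hl
      by_cases hred : R.Reduced l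
      · exact ⟨l, List.Sublist.refl _, rfl, hred⟩
      · have hlne : l ≠ [] := by
          intro h; subst h; exact hred reduced_nil
        have hlpos : 1 ≤ l.length := List.length_pos_iff.2 hlne
        have hex : ∃ j, ¬ R.Reduced (l.take (j + 1)) := by
          refine ⟨l.length - 1, ?_⟩
          have : l.length - 1 + 1 = l.length := by omega
          rw [this, List.take_length]
          exact hred
        set j := Nat.find hex with hj
        have hPj : ¬ R.Reduced (l.take (j + 1)) := Nat.find_spec hex
        have hjle : j ≤ l.length - 1 := by
          rw [hj]
          exact Nat.find_min' hex (by
            have : l.length - 1 + 1 = l.length := by omega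
            rw [this, List.take_length]; exact hred)
        have hjlt : j < l.length := by omega
        have hredj : R.Reduced (l.take j) := by
          rcases Nat.eq_zero_or_pos j with h0 | h0
          · rw [h0, List.take_zero]; exact reduced_nil
          · obtain ⟨j', hj'⟩ := Nat.exists_eq_succ_of_ne_zero (Nat.pos_iff_ne_zero.1 h0)
            have hlt : j' < Nat.find hex := by omega
            have := Nat.find_min hex hlt
            rw [hj']
            exact not_not.1 this
        set P := R.wordProd (l.take j) with hPdef
        set c := l.get ⟨j, hjlt⟩ with hc
        have htake : l.take (j + 1) = l.take j ++ [c] := by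
          rw [List.take_succ]
          congr 1
          rw [List.getElem?_eq_getElem hjlt]
          rfl
        have hPc : R.wordProd (l.take (j + 1)) = P * R.S c := by
          rw [htake, wordProd_append, wordProd_singleton]
        have hlenP : R.len P = j := by
          have := reduced_word_len hR hredj
          rwa [List.length_take, min_eq_left (le_of_lt hjlt)] at this
        have hlenPc : R.len (P * R.S c) ≤ j := by
          have h1 : R.len (R.wordProd (l.take (j+1))) ≤ (l.take (j+1)).length :=
            len_le_length _
          have h2 : (l.take (j+1)).length = j + 1 := by
            rw [List.length_take]; omega
          have h3 : R.len (R.wordProd (l.take (j+1))) ≠ j + 1 := by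
            intro h
            exact hPj (by rw [Reduced, h, h2])
          rw [hPc] at h1 h3
          omega
        have hPW : P ∈ R.weylGroup := wordProd_mem _
        have hdesc : R.len (P * R.S c) < R.len P := by
          rcases len_muls_cases hR hPW c with h | h
          · exact h
          · omega
        have hnegc : -(P (R.α c)) ∈ R.pos := (neg_iff_len_lt_right hR hPW c).2 hdesc
        obtain ⟨m, hmsub, hmprod, hmlen⟩ := exchange_right hR (l.take j) (hR.simple_pos c) (by
          rw [← hPdef]; exact hnegc)
        have hProdl : R.wordProd l = R.wordProd (m ++ l.drop (j + 1)) := by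
          conv_lhs => rw [← List.take_append_drop (j+1) l]
          rw [wordProd_append, wordProd_append, hPc, ← hmprod]
          rfl
        have hsubl : (m ++ l.drop (j + 1)).Sublist l := by
          conv_rhs => rw [← List.take_append_drop (j+1) l]
          apply List.Sublist.append
          · exact hmsub.trans (by rw [htake]; exact List.sublist_append_left _ _)
          · exact List.Sublist.refl _
        have hlenshort : (m ++ l.drop (j + 1)).length ≤ n := by
          rw [List.length_append, List.length_drop]
          rw [List.length_take, min_eq_left (le_of_lt hjlt)] at hmlen
          omega
        obtain ⟨l', hsub', hprod', hred'⟩ := ih _ hlenshort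
        exact ⟨l', hsub'.trans hsubl, by rw [hprod', ← hProdl], hred'⟩

end Length

end RootData

namespace RootData

variable {R : RootData}

/-- One step of the Bruhat chain order: `x` is obtained from `y` by left
multiplication by a reflection, decreasing length. -/
def chainStep (R : RootData) (x y : R.Aut) : Prop :=
  ∃ β ∈ R.pos, x = R.s β * y ∧ -(y⁻¹ β) ∈ R.pos

/-- The chain (reflection) order. -/
def chainLE (R : RootData) : R.Aut → R.Aut → Prop :=
  Relation.ReflTransGen R.chainStep

section Chain
variable (hR : R.IsRootSystem)
include hR

lemma step_subword {x y : R.Aut} (hstep : R.chainStep x y) {r : List (Fin R.r)}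
    (hr : R.Reduced r) (hry : R.wordProd r = y) :
    ∃ r', r'.Sublist r ∧ R.Reduced r' ∧ R.wordProd r' = x ∧ r'.length < r.length := by
  obtain ⟨β, hβ, hx, hneg⟩ := hstep
  have hneg' : -((R.wordProd r)⁻¹ β) ∈ R.pos := by rwa [hry]
  obtain ⟨k, hklen, herase⟩ := exchange_erase hR r hβ hneg'
  obtain ⟨l', hsub', hprod', hred'⟩ := deletion hR (r.eraseIdx k)
  refine ⟨l', hsub'.trans (List.eraseIdx_sublist r k), hred', ?_, ?_⟩
  · rw [hprod', ← herase, hry, hx]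
  · have h1 : l'.length ≤ (r.eraseIdx k).length := hsub'.length_le
    rw [List.length_eraseIdx, if_pos hklen] at h1
    omega

lemma step_mem {x y : R.Aut} (hstep : R.chainStep x y) (hy : y ∈ R.weylGroup) :
    x ∈ R.weylGroup := by
  obtain ⟨r, hr, hry⟩ := exists_reduced hR hy
  obtain ⟨r', _, _, hprod, _⟩ := step_subword hR hstep hr hry
  rw [← hprod]
  exact wordProd_mem _

lemma step_len_lt {x y : R.Aut} (hstep : R.chainStep x y) (hy : y ∈ R.weylGroup) :
    R.len x < R.len y := by
  obtain ⟨r, hr, hry⟩ := exists_reduced hR hy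
  obtain ⟨r', _, _, hprod, hlen⟩ := step_subword hR hstep hr hry
  have h1 : R.len x ≤ r'.length := len_le_of_word _ hprod
  have h2 : R.len y = r.length := by rw [← hry]; exact hr
  omega

lemma chain_subword {x y : R.Aut} (h : R.chainLE x y) {r : List (Fin R.r)}
    (hr : R.Reduced r) (hry : R.wordProd r = y) :
    ∃ r', r'.Sublist r ∧ R.Reduced r' ∧ R.wordProd r' = x := by
  induction h using Relation.ReflTransGen.head_induction_on with
  | refl => exact ⟨r, List.Sublist.refl _, hr, hry⟩
  | head hstep _ ih =>
      obtain ⟨r', hsub', hred', hprod'⟩ := ih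
      obtain ⟨r'', hsub'', hred'', hprod'', _⟩ := step_subword hR hstep hred' hprod'
      exact ⟨r'', hsub''.trans hsub', hred'', hprod''⟩

lemma chain_mem {x y : R.Aut} (h : R.chainLE x y) (hy : y ∈ R.weylGroup) :
    x ∈ R.weylGroup := by
  obtain ⟨r, hr, hry⟩ := exists_reduced hR hy
  obtain ⟨r', _, _, hprod⟩ := chain_subword hR h hr hry
  rw [← hprod]
  exact wordProd_mem _

lemma chain_cases {x y : R.Aut} (h : R.chainLE x y) (hy : y ∈ R.weylGroup) :
    x = y ∨ R.len x < R.len y := by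
  induction h with
  | refl => exact Or.inl rfl
  | tail hchain hstep ih =>
      rename_i b c
      have hbW : b ∈ R.weylGroup := step_mem hR hstep hy
      have hlt : R.len b < R.len c := step_len_lt hR hstep hy
      rcases ih hbW with rfl | hlt2
      · exact Or.inr hlt
      · exact Or.inr (by omega)

end Chain

end RootData

namespace RootData

variable {R : RootData}

section ZLemma
variable (hR : R.IsRootSystem)
include hR

lemma neg_S_neg {δ : R.V} (i : Fin R.r) (hδ : -δ ∈ R.pos)
    (hnm : ∀ q : ℚ, 0 < q → -δ ≠ q • R.α i) : -(R.S i δ) ∈ R.pos := by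
  by_contra hcon
  have h1 : R.S i (-δ) ∉ R.pos := by rwa [map_neg]
  obtain ⟨q, hq, heqq⟩ := simple_scaled hR i hδ h1
  exact hnm q hq heqq

lemma s_eq_conj_S {v : R.Aut} (hv : v ∈ R.weylGroup) (i : Fin R.r) :
    R.s (v (R.α i)) = v * R.S i * v⁻¹ := by
  have := s_conj hR hv (hR.simple_mem i)
  rw [this]
  rfl

lemma step_vSi_v {v : R.Aut} (hv : v ∈ R.weylGroup) {i : Fin R.r}
    (hi : R.len (v * R.S i) < R.len v) : R.chainStep (v * R.S i) v := by
  have hβ : -(v (R.α i)) ∈ R.pos := (neg_iff_len_lt_right hR hv i).2 hi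
  refine ⟨-(v (R.α i)), hβ, ?_, ?_⟩
  · have hvαΦ : v (R.α i) ∈ R.Φ := weyl_mem_Phi hR hv (hR.simple_mem i)
    have hβΦ : -(v (R.α i)) ∈ R.Φ := hR.pos_subset hβ
    have hs : R.s (-(v (R.α i))) = R.s (v (R.α i)) :=
      s_eq_of_smul hR hβΦ hvαΦ (q := -1) (by module)
    rw [hs, s_eq_conj_S hR hv i, mul_assoc, inv_mul_cancel, mul_one]
  · have : v⁻¹ (-(v (R.α i))) = -(R.α i) := by
      rw [map_neg, inv_apply_apply]
    rw [this, neg_neg]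
    exact hR.simple_pos i

lemma step_w_wSi {w : R.Aut} (hw : w ∈ R.weylGroup) {i : Fin R.r}
    (hi : R.len w < R.len (w * R.S i)) : R.chainStep w (w * R.S i) := by
  have hβ : w (R.α i) ∈ R.pos := by
    have hΦ := weyl_mem_Phi hR hw (hR.simple_mem i)
    apply pos_of_not_neg hR hΦ
    intro hcon
    have := (neg_iff_len_lt_right hR hw i).1 hcon
    omega
  refine ⟨w (R.α i), hβ, ?_, ?_⟩
  · rw [s_eq_conj_S hR hw i, mul_assoc (w * R.S i) w⁻¹ (w * R.S i), inv_mul_cancel_left,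
      mul_assoc, S_mul_self hR, mul_one]
  · have h1 : (w * R.S i)⁻¹ (w (R.α i)) = R.S i (w⁻¹ (w (R.α i))) := by
      rw [mul_inv_rev, S_inv hR, mul_apply]
    have h2 : R.S i (R.α i) = -(R.α i) := s_apply_self (coroot_simple_self hR i)
    rw [h1, inv_apply_apply, h2, neg_neg]
    exact hR.simple_pos i

lemma step_muls {v w : R.Aut} (hw : w ∈ R.weylGroup) {i : Fin R.r}
    (hstep : R.chainStep v w) (hi : R.len w < R.len (w * R.S i)) :
    R.chainStep (v * R.S i) (w * R.S i) := by
  obtain ⟨β, hβ, hveq, hneg⟩ := hstep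
  refine ⟨β, hβ, by rw [hveq, mul_assoc], ?_⟩
  have h1 : (w * R.S i)⁻¹ β = R.S i (w⁻¹ β) := by
    rw [mul_inv_rev, S_inv hR, mul_apply]
  rw [h1]
  apply neg_S_neg hR i hneg
  intro q hq heqq
  have hwα : w (R.α i) ∈ R.pos := by
    have hΦ := weyl_mem_Phi hR hw (hR.simple_mem i)
    apply pos_of_not_neg hR hΦ
    intro hcon
    have := (neg_iff_len_lt_right hR hw i).1 hcon
    omega
  apply no_pos_neg_smul hR hwα hq
  have h2 : w⁻¹ β = -(q • R.α i) := neg_eq_iff_eq_neg.1 heqq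
  have hβval : β = -(q • w (R.α i)) := by
    calc β = w (w⁻¹ β) := (apply_inv_apply w β).symm
    _ = w (-(q • R.α i)) := by rw [h2]
    _ = -(q • w (R.α i)) := by rw [map_neg, map_smul]
  rw [← hβval]
  exact hβ

lemma ZZ : ∀ n : ℕ,
    (∀ w, w ∈ R.weylGroup → R.len w ≤ n → ∀ i : Fin R.r,
      R.len w < R.len (w * R.S i) → ∀ u, R.chainLE u w →
        R.chainLE (u * R.S i) (w * R.S i)) ∧
    (∀ v, v ∈ R.weylGroup → R.len v ≤ n → ∀ i : Fin R.r,
      R.len (v * R.S i) < R.len v → ∀ u, R.chainLE u v →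
        R.chainLE (u * R.S i) v) := by
  intro n
  induction n using Nat.strong_induction_on with
  | _ n IH =>
  constructor
  · intro w hw hlen i hi u hchain
    rcases Relation.ReflTransGen.cases_tail hchain with heq | ⟨v, huv, hstep⟩
    · subst heq
      exact Relation.ReflTransGen.refl
    · have hvW := step_mem hR hstep hw
      have hvlt := step_len_lt hR hstep hw
      rcases len_muls_cases hR hvW i with hcase | hcase
      · have IH2 := (IH (R.len v) (by omega)).2 v hvW le_rfl i hcase u huv
        exact (IH2.tail hstep).tail (step_w_wSi hR hw hi)
      · have IH1 := (IH (R.len v) (by omega)).1 v hvW le_rfl i hcase u huv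
        exact IH1.tail (step_muls hR hw hstep hi)
  · intro v hv hlen i hi u hchain
    rcases Relation.ReflTransGen.cases_tail hchain with heq | ⟨y, huy, hstep⟩
    · subst heq
      exact Relation.ReflTransGen.single (step_vSi_v hR hv hi)
    · have hyW := step_mem hR hstep hv
      have hylt := step_len_lt hR hstep hv
      rcases len_muls_cases hR hyW i with hcase | hcase
      · have IH2 := (IH (R.len y) (by omega)).2 y hyW le_rfl i hcase u huy
        exact IH2.tail hstep
      · obtain ⟨β, hβ, hyeq, hneg⟩ := hstep
        by_cases hd : -(R.S i (v⁻¹ β)) ∈ R.pos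
        · have IH1 := (IH (R.len y) (by omega)).1 y hyW le_rfl i hcase u huy
          have hstep2 : R.chainStep (y * R.S i) (v * R.S i) := by
            refine ⟨β, hβ, by rw [hyeq, mul_assoc], ?_⟩
            have h1 : (v * R.S i)⁻¹ β = R.S i (v⁻¹ β) := by
              rw [mul_inv_rev, S_inv hR, mul_apply]
            rw [h1]
            exact hd
          exact (IH1.tail hstep2).tail (step_vSi_v hR hv hi)
        · have h1 : R.S i (-(v⁻¹ β)) ∉ R.pos := by rwa [map_neg]
          obtain ⟨q, hq, heqq⟩ := simple_scaled hR i hneg h1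
          have hvαΦ : v (R.α i) ∈ R.Φ := weyl_mem_Phi hR hv (hR.simple_mem i)
          have h2 : v⁻¹ β = -(q • R.α i) := neg_eq_iff_eq_neg.1 heqq
          have hβval : β = (-q) • (v (R.α i)) := by
            calc β = v (v⁻¹ β) := (apply_inv_apply v β).symm
            _ = v (-(q • R.α i)) := by rw [h2]
            _ = (-q) • (v (R.α i)) := by rw [map_neg, map_smul, neg_smul]
          have hy_eq : y = v * R.S i := by
            have hsβ : R.s β = R.s (v (R.α i)) :=
              s_eq_of_smul hR (hR.pos_subset hβ) hvαΦ hβval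
            rw [hyeq, hsβ, s_eq_conj_S hR hv i, mul_assoc, inv_mul_cancel, mul_one]
          have hvsW : v * R.S i ∈ R.weylGroup := mul_s_mem hv i
          have hii : R.len (v * R.S i) < R.len ((v * R.S i) * R.S i) := by
            rw [mul_assoc, S_mul_self hR, mul_one]
            exact hi
          have := (IH (R.len (v * R.S i)) (by omega)).1 (v * R.S i) hvsW le_rfl i hii u
            (hy_eq ▸ huy)
          rwa [mul_assoc, S_mul_self hR, mul_one] at this

end ZLemma

end RootData

namespace RootData

variable {R : RootData}

section Bridge
variable (hR : R.IsRootSystem)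
include hR

lemma reduced_append {a b : List (Fin R.r)} (h : R.Reduced (a ++ b)) :
    R.Reduced a ∧ R.Reduced b := by
  have hh : R.len (R.wordProd (a ++ b)) = a.length + b.length := by
    rw [h, List.length_append]
  rw [wordProd_append] at hh
  have h1 : R.len (R.wordProd a) ≤ a.length := len_le_length a
  have h2 : R.len (R.wordProd b) ≤ b.length := len_le_length b
  have h3 : R.len (R.wordProd a * R.wordProd b) ≤
      R.len (R.wordProd a) + R.len (R.wordProd b) :=
    len_mul_le hR (wordProd_mem a) (wordProd_mem b)
  constructor <;> (show R.len _ = _; omega)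

lemma chain_of_sub : ∀ (r : List (Fin R.r)), R.Reduced r → ∀ r', r'.Sublist r →
    R.chainLE (R.wordProd r') (R.wordProd r) := by
  intro r
  induction r using List.reverseRecOn with
  | nil =>
      intro _ r' hsub
      rw [List.sublist_nil.1 hsub]
      exact Relation.ReflTransGen.refl
  | append_singleton p c ih =>
      intro hred r' hsub
      have hp : R.Reduced p := (reduced_append hR (b := [c]) hred).1
      have hPW : R.wordProd p ∈ R.weylGroup := wordProd_mem p
      have hlenP : R.len (R.wordProd p) = p.length := hp
      have hlenPc : R.len (R.wordProd p * R.S c) = p.length + 1 := by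
        have := reduced_word_len hR hred
        rwa [wordProd_append, wordProd_singleton, List.length_append, List.length_singleton]
          at this
      have hlt : R.len (R.wordProd p) < R.len (R.wordProd p * R.S c) := by omega
      obtain ⟨a, b, rfl, hasub, hbsub⟩ := List.sublist_append_iff.1 hsub
      have hbcases : b = [] ∨ b = [c] := by
        cases hbsub with
        | cons _ h => left; exact List.sublist_nil.1 h
        | cons_cons _ h => right; rw [List.sublist_nil.1 h]
      rcases hbcases with rfl | rfl
      · have hchain := ih hp a hasub
        rw [List.append_nil, wordProd_append, wordProd_singleton]
        exact hchain.tail (step_w_wSi hR hPW hlt)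
      · have hchain := ih hp a hasub
        rw [wordProd_append, wordProd_singleton, wordProd_append, wordProd_singleton]
        exact ((ZZ hR (R.len (R.wordProd p))).1 (R.wordProd p) hPW le_rfl c hlt
          (R.wordProd a) hchain)

lemma bruhat_iff_chain {x w : R.Aut} (hw : w ∈ R.weylGroup) :
    R.BruhatLE x w ↔ R.chainLE x w := by
  constructor
  · rintro ⟨l, hl, rfl, l', hsub, rfl⟩
    exact chain_of_sub hR l hl l' hsub
  · intro h
    obtain ⟨r, hr, hrw⟩ := exists_reduced hR hw
    obtain ⟨r', hsub, _, hprod⟩ := chain_subword hR h hr hrw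
    exact ⟨r, hr, hrw, r', hsub, hprod⟩

lemma bruhat_mem_left {x w : R.Aut} (h : R.BruhatLE x w) : x ∈ R.weylGroup := by
  obtain ⟨l, _, _, l', _, hprod⟩ := h
  rw [← hprod]
  exact wordProd_mem _

lemma bruhat_mem_right {x w : R.Aut} (h : R.BruhatLE x w) : w ∈ R.weylGroup := by
  obtain ⟨l, _, hprod, _⟩ := h
  rw [← hprod]
  exact wordProd_mem _

omit hR in
lemma bruhat_refl {w : R.Aut} (hR : R.IsRootSystem) (hw : w ∈ R.weylGroup) :
    R.BruhatLE w w := by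
  obtain ⟨l, hl, hprod⟩ := exists_reduced hR hw
  exact ⟨l, hl, hprod, l, List.Sublist.refl _, hprod⟩

lemma bruhat_len_le {x w : R.Aut} (h : R.BruhatLE x w) :
    R.len x ≤ R.len w ∧ (R.len x = R.len w → x = w) := by
  obtain ⟨l, hl, hprod, l', hsub, hprod'⟩ := h
  have h1 : R.len x ≤ l'.length := len_le_of_word _ hprod'
  have h2 : l'.length ≤ l.length := hsub.length_le
  have h3 : R.len w = l.length := by rw [← hprod]; exact hl
  refine ⟨by omega, fun heq => ?_⟩
  have h4 : R.len x = l'.length := by omega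
  have h5 : l' = l := hsub.eq_of_length (by omega)
  rw [← hprod, ← hprod', h5]

lemma bruhat_antisymm {x w : R.Aut} (h1 : R.BruhatLE x w) (h2 : R.BruhatLE w x) :
    x = w := by
  have a1 := bruhat_len_le hR h1
  have a2 := bruhat_len_le hR h2
  exact a1.2 (by omega)

lemma bruhat_inv {x w : R.Aut} (h : R.BruhatLE x w) : R.BruhatLE x⁻¹ w⁻¹ := by
  obtain ⟨l, hl, hprod, l', hsub, hprod'⟩ := h
  refine ⟨l.reverse, ?_, by rw [wordProd_reverse hR, hprod], l'.reverse, hsub.reverse,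
    by rw [wordProd_reverse hR, hprod']⟩
  show R.len (R.wordProd l.reverse) = _
  rw [wordProd_reverse hR, len_inv hR (wordProd_mem l), List.length_reverse]
  exact hl

/-- The key lifting lemma (Lemma C): if `s_i u < u` and `y ≤ u`,
then `s_i y ≤ u`. -/
lemma bruhat_smul_of_descent {u y : R.Aut} (hu : u ∈ R.weylGroup) {i : Fin R.r}
    (hlt : R.len (R.S i * u) < R.len u) (h : R.BruhatLE y u) :
    R.BruhatLE (R.S i * y) u := by
  have huinv : u⁻¹ ∈ R.weylGroup := Subgroup.inv_mem _ hu
  have hinv := bruhat_inv hR h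
  have hchain := (bruhat_iff_chain hR huinv).1 hinv
  have hlt' : R.len (u⁻¹ * R.S i) < R.len u⁻¹ := by
    have he : u⁻¹ * R.S i = (R.S i * u)⁻¹ := by rw [mul_inv_rev, S_inv hR]
    rw [he, len_inv hR (smul_mem hu i), len_inv hR hu]
    exact hlt
  have hZ := (ZZ hR (R.len u⁻¹)).2 u⁻¹ huinv le_rfl i hlt' y⁻¹ hchain
  have hres := (bruhat_iff_chain hR huinv).2 hZ
  have hres2 := bruhat_inv hR hres
  have he2 : (y⁻¹ * R.S i)⁻¹ = R.S i * y := by rw [mul_inv_rev, S_inv hR, inv_inv]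
  rwa [he2, inv_inv] at hres2

lemma bruhat_mono_smul {u y : R.Aut} (hu : u ∈ R.weylGroup) {i : Fin R.r}
    (hlt : R.len u < R.len (R.S i * u)) (h : R.BruhatLE y u) :
    R.BruhatLE y (R.S i * u) ∧ R.BruhatLE (R.S i * y) (R.S i * u) := by
  obtain ⟨l, hl, hprod, l', hsub, hprod'⟩ := h
  have hred : R.Reduced (i :: l) := by
    show R.len (R.wordProd (i :: l)) = _
    rw [wordProd_cons, hprod]
    have h1 : R.len (R.S i * u) ≤ R.len u + 1 := by
      have := len_le_of_word (i :: l) (by rw [wordProd_cons, hprod])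
      rw [List.length_cons] at this
      have h2 : R.len u = l.length := by rw [← hprod]; exact hl
      omega
    have h2 : R.len u = l.length := by rw [← hprod]; exact hl
    rw [List.length_cons]
    omega
  have hprodc : R.wordProd (i :: l) = R.S i * u := by rw [wordProd_cons, hprod]
  constructor
  · exact ⟨i :: l, hred, hprodc, l', hsub.trans (List.sublist_cons_self i l), hprod'⟩
  · exact ⟨i :: l, hred, hprodc, i :: l', hsub.cons₂ i, by rw [wordProd_cons, hprod']⟩

end Bridge

end RootData

namespace RootData

variable {R : RootData}

section Demazure

lemma dmulList_nil (w : R.Aut) : R.dmulList [] w = w := rfl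

lemma dmulList_cons (i : Fin R.r) (t : List (Fin R.r)) (w : R.Aut) :
    R.dmulList (i :: t) w = R.dmulStep i (R.dmulList t w) := rfl

lemma dmulList_append' (a b : List (Fin R.r)) (w : R.Aut) :
    R.dmulList (a ++ b) w = R.dmulList a (R.dmulList b w) :=
  List.foldr_append

lemma dmulStep_mem {x : R.Aut} (hx : x ∈ R.weylGroup) (i : Fin R.r) :
    R.dmulStep i x ∈ R.weylGroup := by
  rw [dmulStep]
  split_ifs
  · exact smul_mem hx i
  · exact hx

lemma dmulList_mem (l : List (Fin R.r)) {w : R.Aut} (hw : w ∈ R.weylGroup) :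
    R.dmulList l w ∈ R.weylGroup := by
  induction l with
  | nil => exact hw
  | cons i t ih => rw [dmulList_cons]; exact dmulStep_mem ih i

variable (hR : R.IsRootSystem)
include hR

lemma dmulList_reduced {m : List (Fin R.r)} (hm : R.Reduced m) :
    R.dmulList m 1 = R.wordProd m := by
  induction m with
  | nil => rfl
  | cons i t ih =>
      have ht : R.Reduced t := (reduced_append hR (a := [i]) (b := t) hm).2
      rw [dmulList_cons, ih ht, dmulStep]
      have h1 : R.len (R.wordProd t) = t.length := ht
      have h2 : R.len (R.S i * R.wordProd t) = t.length + 1 := by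
        have := reduced_word_len hR hm
        rwa [wordProd_cons, List.length_cons] at this
      rw [if_pos (by omega), wordProd_cons]

omit hR in
lemma dmulList_sub (n : List (Fin R.r)) :
    ∃ n', n'.Sublist n ∧ R.wordProd n' = R.dmulList n 1 := by
  induction n with
  | nil => exact ⟨[], List.Sublist.refl _, rfl⟩
  | cons i t ih =>
      obtain ⟨t', hsub, hprod⟩ := ih
      rw [dmulList_cons, dmulStep]
      split_ifs
      · exact ⟨i :: t', hsub.cons₂ i, by rw [wordProd_cons, hprod]⟩
      · exact ⟨t', hsub.cons i, hprod⟩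

lemma bruhat_le_dmulList : ∀ (n l' : List (Fin R.r)), l'.Sublist n →
    R.BruhatLE (R.wordProd l') (R.dmulList n 1) := by
  intro n
  induction n with
  | nil =>
      intro l' h
      rw [List.sublist_nil.1 h]
      exact bruhat_refl hR (Subgroup.one_mem _)
  | cons i t ih =>
      intro l' hsub
      have huW : R.dmulList t 1 ∈ R.weylGroup := dmulList_mem t (Subgroup.one_mem _)
      rcases List.sublist_cons_iff.1 hsub with h | ⟨r', rfl, hr'⟩
      · have hy := ih l' h
        rw [dmulList_cons, dmulStep]
        split_ifs with hlt
        · exact (bruhat_mono_smul hR huW hlt hy).1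
        · exact hy
      · have hy := ih r' hr'
        rw [dmulList_cons, dmulStep, wordProd_cons]
        split_ifs with hlt
        · exact (bruhat_mono_smul hR huW hlt hy).2
        · have hlt2 : R.len (R.S i * R.dmulList t 1) < R.len (R.dmulList t 1) :=
            (len_smul_cases hR huW i).resolve_right hlt
          exact bruhat_smul_of_descent hR huW hlt2 hy

end Demazure

end RootData

theorem statement5 (R : RootData) (hR : R.IsRootSystem)
    (v w : R.Aut) (hv : v ∈ R.weylGroup) (hw : w ∈ R.weylGroup) :
    (∃ x q : R.Aut, R.BruhatLE x v ∧ R.BruhatLE q w ∧ x * q = R.dmul v w) ∧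
      ∀ x q : R.Aut, R.BruhatLE x v → R.BruhatLE q w →
        R.BruhatLE (x * q) (R.dmul v w) := by
  open RootData in
  have hEx : ∃ l : List (Fin R.r), R.Reduced l ∧ R.wordProd l = v := exists_reduced hR hv
  have hdm : R.dmul v w = R.dmulList hEx.choose w := dif_pos hEx
  have hL0red : R.Reduced hEx.choose := hEx.choose_spec.1
  have hL0v : R.wordProd hEx.choose = v := hEx.choose_spec.2
  obtain ⟨M, hM, hMw⟩ := exists_reduced hR hw
  have hdml : R.dmul v w = R.dmulList (hEx.choose ++ M) 1 := by
    rw [hdm, dmulList_append', dmulList_reduced hR hM, hMw]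
  constructor
  · obtain ⟨n', hsub, hprod⟩ := dmulList_sub (hEx.choose ++ M)
    obtain ⟨a, b, rfl, hasub, hbsub⟩ := List.sublist_append_iff.1 hsub
    refine ⟨R.wordProd a, R.wordProd b, ⟨hEx.choose, hL0red, hL0v, a, hasub, rfl⟩,
      ⟨M, hM, hMw, b, hbsub, rfl⟩, ?_⟩
    rw [← wordProd_append, hprod, ← hdml]
  · intro x q hx hq
    have hxchain := (bruhat_iff_chain hR hv).1 hx
    obtain ⟨a, hasub, _, haprod⟩ := chain_subword hR hxchain hL0red hL0v
    obtain ⟨lw, hlw, hlwprod, b, hbsub, hbprod⟩ := hq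
    have hxq : R.wordProd (a ++ b) = x * q := by rw [wordProd_append, haprod, hbprod]
    have hkey := bruhat_le_dmulList hR (hEx.choose ++ lw) (a ++ b) (hasub.append hbsub)
    rw [hxq] at hkey
    have hfin : R.dmulList (hEx.choose ++ lw) 1 = R.dmul v w := by
      rw [dmulList_append', dmulList_reduced hR hlw, hlwprod, hdm]
    rwa [hfin] at hkey
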